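/- Let I : [0,∞) → ℝ be a nonnegative C¹ function satisfying I'(t) ≤ C·I(t) - C·I(t)² for a constant C > 0, and suppose ∫₀^∞ I(t) dt < ∞. Then I(t) → 0 as t → ∞. -/

import Mathlib

open MeasureTheory Set Filter

/-- Gronwall-type backward bound: if `I' ≤ C·I` on `[0,∞)` then
`I b * exp(-(C*(b-a))) ≤ I a` for `0 ≤ a ≤ b`. -/
theorem stmt2_gronwall (I I' : ℝ → ℝ) (C : ℝ)
    (hderiv : ∀ t ∈ Set.Ici (0 : ℝ), HasDerivAt I (I' t) t)
    (hode' : ∀ t ∈ Set.Ici (0 : ℝ), I' t ≤ C * I t)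
    {a b : ℝ} (ha : 0 ≤ a) (hab : a ≤ b) :
    I b * Real.exp (-(C * (b - a))) ≤ I a := by
  set g : ℝ → ℝ := fun u => I u * Real.exp (-(C * u)) with hg_def
  have hg : ∀ u ∈ Set.Ici (0 : ℝ),
      HasDerivAt g ((I' u - C * I u) * Real.exp (-(C * u))) u := by
    intro u hu
    have h1 : HasDerivAt (fun x : ℝ => Real.exp (-(C * x)))
        (Real.exp (-(C * u)) * (-C * 1)) u := by
      have h0 : HasDerivAt (fun x : ℝ => -C * x) (-C * 1) u :=
        (hasDerivAt_id u).const_mul (-C)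
      simpa [neg_mul] using h0.exp
    have h2 := (hderiv u hu).mul h1
    refine h2.congr_deriv ?_
    ring
  have hanti : AntitoneOn g (Set.Icc a b) := by
    apply antitoneOn_of_deriv_nonpos (convex_Icc a b)
    · intro x hx
      exact ((hg x (ha.trans hx.1)).continuousAt).continuousWithinAt
    · intro x hx
      rw [interior_Icc] at hx
      exact ((hg x (ha.trans hx.1.le)).differentiableAt).differentiableWithinAt
    · intro x hx
      rw [interior_Icc] at hx
      have hx0 : (0 : ℝ) ≤ x := ha.trans hx.1.le
      rw [(hg x hx0).deriv]
      have := hode' x hx0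
      exact mul_nonpos_of_nonpos_of_nonneg (by linarith) (Real.exp_nonneg _)
  have hgb : g b ≤ g a := hanti ⟨le_rfl, hab⟩ ⟨hab, le_rfl⟩ hab
  have hsplit : Real.exp (-(C * b)) = Real.exp (-(C * (b - a))) * Real.exp (-(C * a)) := by
    rw [← Real.exp_add]; ring_nf
  have : I b * Real.exp (-(C * (b - a))) * Real.exp (-(C * a))
      ≤ I a * Real.exp (-(C * a)) := by
    calc I b * Real.exp (-(C * (b - a))) * Real.exp (-(C * a))
        = I b * Real.exp (-(C * b)) := by rw [hsplit]; ring
      _ ≤ I a * Real.exp (-(C * a)) := hgb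
  exact le_of_mul_le_mul_right this (Real.exp_pos _)

/-- Donaldson–Kronheimer Prop. 6.2.14 technique: a nonnegative `C¹` function `I` on `[0,∞)`
with `I' ≤ C·I - C·I²` and finite total integral tends to `0` at infinity. -/
theorem stmt_2 (I I' : ℝ → ℝ) (C : ℝ) (hC : 0 < C)
    (hderiv : ∀ t ∈ Set.Ici (0 : ℝ), HasDerivAt I (I' t) t)
    (hcont : ContinuousOn I' (Set.Ici (0 : ℝ)))
    (hnonneg : ∀ t ∈ Set.Ici (0 : ℝ), 0 ≤ I t)
    (hode : ∀ t ∈ Set.Ici (0 : ℝ), I' t ≤ C * I t - C * (I t) ^ 2)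
    (hint : MeasureTheory.IntegrableOn I (Set.Ici (0 : ℝ))) :
    Filter.Tendsto I Filter.atTop (nhds 0) := by
  have hode' : ∀ t ∈ Set.Ici (0 : ℝ), I' t ≤ C * I t := fun t ht =>
    (hode t ht).trans (by nlinarith [sq_nonneg (I t)])
  set δ : ℝ := Real.log 2 / C with hδ_def
  have hδ : 0 < δ := div_pos (Real.log_pos one_lt_two) hC
  -- the key Gronwall consequence: if 0 ≤ t - δ and s ∈ [t-δ, t] then I t / 2 ≤ I s
  have key : ∀ t s : ℝ, δ ≤ t → t - δ ≤ s → s ≤ t → I t / 2 ≤ I s := by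
    intro t s ht hs1 hs2
    have hs0 : (0 : ℝ) ≤ s := le_trans (by linarith) hs1
    have hg := stmt2_gronwall I I' C hderiv hode' hs0 hs2
    have hts : t - s ≤ δ := by linarith
    have hexp : Real.exp (-(C * δ)) ≤ Real.exp (-(C * (t - s))) := by
      apply Real.exp_le_exp.2
      have : C * (t - s) ≤ C * δ := mul_le_mul_of_nonneg_left hts hC.le
      linarith
    have hCδ : C * δ = Real.log 2 := by
      rw [hδ_def]; field_simp
    have hval : Real.exp (-(C * δ)) = 1 / 2 := by
      rw [hCδ, Real.exp_neg, Real.exp_log two_pos]; norm_num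
    have hIt : 0 ≤ I t := hnonneg t (le_trans hδ.le ht)
    have : I t * Real.exp (-(C * δ)) ≤ I t * Real.exp (-(C * (t - s))) :=
      mul_le_mul_of_nonneg_left hexp hIt
    calc I t / 2 = I t * Real.exp (-(C * δ)) := by rw [hval]; ring
      _ ≤ I t * Real.exp (-(C * (t - s))) := this
      _ ≤ I s := hg
  -- the cumulative integral
  set F : ℝ → ℝ := fun T => ∫ x in Set.Ioc (0 : ℝ) T, I x with hF_def
  have hInonneg_ae : ∀ T : ℝ, 0 ≤ᵐ[MeasureTheory.volume.restrict (Set.Ioc (0:ℝ) T)] I := by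
    intro T
    filter_upwards [MeasureTheory.ae_restrict_mem measurableSet_Ioc] with x hx
    exact hnonneg x hx.1.le
  have hintT : ∀ T : ℝ, MeasureTheory.IntegrableOn I (Set.Ioc (0 : ℝ) T) :=
    fun T => hint.mono_set (fun x hx => hx.1.le)
  have hFmono : Monotone F := by
    intro a b hab
    exact MeasureTheory.setIntegral_mono_set (hintT b) (hInonneg_ae b)
      ((Set.Ioc_subset_Ioc_right hab).eventuallyLE)
  have hFbdd : BddAbove (Set.range F) := by
    refine ⟨∫ x in Set.Ici (0 : ℝ), I x, ?_⟩
    rintro _ ⟨T, rfl⟩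
    apply MeasureTheory.setIntegral_mono_set hint
    · filter_upwards [MeasureTheory.ae_restrict_mem measurableSet_Ici] with x hx
      exact hnonneg x hx
    · exact HasSubset.Subset.eventuallyLE
        (show Set.Ioc (0:ℝ) T ⊆ Set.Ici 0 from fun x hx => hx.1.le)
  have hFlim : Filter.Tendsto F Filter.atTop (nhds (⨆ T, F T)) :=
    tendsto_atTop_ciSup hFmono hFbdd
  have hFlim' : Filter.Tendsto (fun t => F (t - δ)) Filter.atTop (nhds (⨆ T, F T)) :=
    hFlim.comp (tendsto_atTop_add_const_right _ (-δ) tendsto_id |>.congr (by intro x; simp [sub_eq_add_neg]))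
  have hdiff : Filter.Tendsto (fun t => F t - F (t - δ)) Filter.atTop (nhds 0) := by
    simpa using hFlim.sub hFlim'
  rw [Metric.tendsto_atTop]
  intro ε hε
  have hεδ : 0 < ε / 2 * δ := by positivity
  obtain ⟨N, hN⟩ := (Metric.tendsto_atTop.1 hdiff) (ε / 2 * δ) hεδ
  refine ⟨max N δ, fun t ht => ?_⟩
  have htN : N ≤ t := le_trans (le_max_left _ _) ht
  have htδ : δ ≤ t := le_trans (le_max_right _ _) ht
  have ht0 : (0 : ℝ) ≤ t := hδ.le.trans htδ
  rw [Real.dist_eq, sub_zero, abs_of_nonneg (hnonneg t ht0)]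
  by_contra hcon
  push_neg at hcon
  -- I t ≥ ε, derive contradiction
  have hlow : ∀ s ∈ Set.Ioc (t - δ) t, ε / 2 ≤ I s := by
    intro s hs
    have := key t s htδ hs.1.le hs.2
    linarith
  have htδ0 : (0 : ℝ) ≤ t - δ := by linarith
  have hi2 : MeasureTheory.IntegrableOn I (Set.Ioc (t - δ) t) :=
    hint.mono_set (fun x hx => le_trans htδ0 hx.1.le)
  have hsplit : F t = F (t - δ) + ∫ x in Set.Ioc (t - δ) t, I x := by
    rw [hF_def]
    rw [← MeasureTheory.setIntegral_union (Set.Ioc_disjoint_Ioc_of_le le_rfl) measurableSet_Ioc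
      (hintT (t - δ)) hi2, Set.Ioc_union_Ioc_eq_Ioc htδ0 (by linarith)]
  have hlb : ε / 2 * δ ≤ ∫ x in Set.Ioc (t - δ) t, I x := by
    have hconst : ∫ _x in Set.Ioc (t - δ) t, (ε / 2) = ε / 2 * δ := by
      rw [MeasureTheory.setIntegral_const]
      simp [Real.volume_Ioc, ENNReal.toReal_ofReal hδ.le, mul_comm, hδ.le]
    rw [← hconst]
    apply MeasureTheory.setIntegral_mono_on
    · exact MeasureTheory.integrableOn_const (by simp)
    · exact hi2
    · exact measurableSet_Ioc
    · exact hlow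
  have := hN t htN
  rw [Real.dist_eq, sub_zero] at this
  have : F t - F (t - δ) < ε / 2 * δ := lt_of_le_of_lt (le_abs_self _) this
  linarith [hsplit ▸ this]
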